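/- For a simple random walk S, the tail σ-field G^∞ = ∩_{n ≥ 0} σ(T^n(S)) of the iterated Csáki–Vincze transform is P-trivial: every event in G^∞ has probability 0 or 1. -/

import Mathlib

open MeasureTheory ProbabilityTheory Filter

noncomputable section

/-- Increment `X_i = S_i - S_{i-1}` of a walk. -/
def inc (S : ℕ → ℤ) (i : ℕ) : ℤ := S i - S (i - 1)

/-- The times `τ_l` of the Csáki–Vincze construction. -/
def cvTau (S : ℕ → ℤ) : ℕ → ℕ
  | 0 => 0
  | l + 1 => sInf {i | cvTau S l < i ∧ S (i - 1) * S (i + 1) < 0}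

/-- The index `l` such that `τ_l + 1 ≤ j ≤ τ_{l+1}`, i.e. the number of
sign-change times strictly before `j`. -/
def cvEll (S : ℕ → ℤ) (j : ℕ) : ℕ :=
  ((Finset.range j).filter fun i => 0 < i ∧ S (i - 1) * S (i + 1) < 0).card

/-- The increments `X̄_j = (-1)^l X_1 X_{j+1}`, `τ_l + 1 ≤ j ≤ τ_{l+1}`. -/
def cvBarX (S : ℕ → ℤ) (j : ℕ) : ℤ := (-1) ^ cvEll S j * inc S 1 * inc S (j + 1)

/-- The Csáki–Vincze transform `T(S)_n = X̄_1 + ⋯ + X̄_n`. -/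
def CV (S : ℕ → ℤ) (n : ℕ) : ℤ := ∑ j ∈ Finset.range n, cvBarX S (j + 1)

/-- Iterates of the Csáki–Vincze transform. -/
def CViter : ℕ → (ℕ → ℤ) → ℕ → ℤ
  | 0, S => S
  | h + 1, S => CV (CViter h S)

/-- `S` is a simple random walk: `S_0 = 0` and the increments are
i.i.d. uniform on `{-1, 1}`. -/
def IsSRW {Ω : Type*} [MeasurableSpace Ω] (P : Measure Ω) (S : Ω → ℕ → ℤ) : Prop :=
  (∀ ω, S ω 0 = 0) ∧
  (∀ ω i, S ω (i + 1) - S ω i = 1 ∨ S ω (i + 1) - S ω i = -1) ∧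
  (∀ i, Measurable fun ω => S ω i) ∧
  iIndepFun (fun i ω => S ω (i + 1) - S ω i) P ∧
  (∀ i, P {ω | S ω (i + 1) - S ω i = 1} = 1 / 2) ∧
  (∀ i, P {ω | S ω (i + 1) - S ω i = -1} = 1 / 2)


/-- a ±1 path starting at 0 -/
def IsPath (p : ℕ → ℤ) : Prop :=
  p 0 = 0 ∧ ∀ i, p (i + 1) - p i = 1 ∨ p (i + 1) - p i = -1

lemma cvEll_congr {p q : ℕ → ℤ} {j : ℕ} (h : ∀ i ≤ j, p i = q i) : cvEll p j = cvEll q j := by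
  unfold cvEll
  congr 1
  apply Finset.filter_congr
  intro i hi
  simp only [Finset.mem_range] at hi
  rw [h (i - 1) (by omega), h (i + 1) (by omega)]

lemma cvBarX_congr {p q : ℕ → ℤ} {j : ℕ} (h : ∀ i ≤ j + 1, p i = q i) :
    cvBarX p j = cvBarX q j := by
  unfold cvBarX inc
  simp only [Nat.add_sub_cancel]
  rw [cvEll_congr (fun i hi => h i (by omega)), h 0 (by omega), h 1 (by omega),
    h j (by omega), h (j + 1) (by omega)]

lemma CV_congr {p q : ℕ → ℤ} {k : ℕ} (h : ∀ i ≤ k + 1, p i = q i) : CV p k = CV q k := by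
  unfold CV
  refine Finset.sum_congr rfl fun j hj => ?_
  simp only [Finset.mem_range] at hj
  exact cvBarX_congr fun i hi => h i (by omega)

lemma CViter_congr : ∀ (n : ℕ) {p q : ℕ → ℤ} (k : ℕ), (∀ i ≤ k + n, p i = q i) →
    CViter n p k = CViter n q k
  | 0, p, q, k, h => h k (by omega)
  | n + 1, p, q, k, h => by
    show CV (CViter n p) k = CV (CViter n q) k
    exact CV_congr fun i hi => CViter_congr n i (fun i' hi' => h i' (by omega))

lemma CV_zero (p : ℕ → ℤ) : CV p 0 = 0 := by simp [CV]

lemma CV_succ_sub (p : ℕ → ℤ) (k : ℕ) : CV p (k + 1) - CV p k = cvBarX p (k + 1) := by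
  simp [CV, Finset.sum_range_succ]

lemma neg_one_pow_mul_self (n : ℕ) : ((-1 : ℤ) ^ n) * ((-1 : ℤ) ^ n) = 1 := by
  rw [← pow_add]
  exact Even.neg_one_pow ⟨n, rfl⟩

lemma IsPath.inc_one {p : ℕ → ℤ} (hp : IsPath p) : inc p 1 = p 1 := by
  show p 1 - p 0 = p 1
  rw [hp.1, sub_zero]

lemma IsPath.one_mem {p : ℕ → ℤ} (hp : IsPath p) : p 1 = 1 ∨ p 1 = -1 := by
  have := hp.2 0
  rw [hp.1, sub_zero] at this
  exact this

lemma sign_cases_mul {a b c : ℤ} (ha : a = 1 ∨ a = -1) (hb : b = 1 ∨ b = -1)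
    (hc : c = 1 ∨ c = -1) : a * b * c = 1 ∨ a * b * c = -1 := by
  rcases ha with rfl | rfl <;> rcases hb with rfl | rfl <;> rcases hc with rfl | rfl <;> simp

lemma neg_one_pow_cases (n : ℕ) : ((-1 : ℤ) ^ n) = 1 ∨ ((-1 : ℤ) ^ n) = -1 := by
  rcases Nat.even_or_odd n with h | h
  · exact Or.inl h.neg_one_pow
  · exact Or.inr h.neg_one_pow

lemma IsPath.cvBarX_cases {p : ℕ → ℤ} (hp : IsPath p) (k : ℕ) :
    cvBarX p (k + 1) = 1 ∨ cvBarX p (k + 1) = -1 := by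
  unfold cvBarX
  refine sign_cases_mul (neg_one_pow_cases _) ?_ ?_
  · rw [hp.inc_one]; exact hp.one_mem
  · exact hp.2 (k + 1)

lemma IsPath.cv {p : ℕ → ℤ} (hp : IsPath p) : IsPath (CV p) := by
  constructor
  · exact CV_zero p
  · intro i
    rw [CV_succ_sub]
    exact hp.cvBarX_cases i

lemma IsPath.cviter {p : ℕ → ℤ} (hp : IsPath p) (n : ℕ) : IsPath (CViter n p) := by
  induction n with
  | zero => exact hp
  | succ n ih => exact ih.cv

/-- reconstruction of the path from `x1 = X_1` and `b = T(S)` -/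
def reconAux (x1 : ℤ) (b : ℕ → ℤ) : ℕ → ℤ
  | 0 => 0
  | 1 => x1
  | j + 2 =>
    reconAux x1 b (j + 1) +
      (-1) ^ cvEll (fun i => reconAux x1 b (min i (j + 1))) (j + 1) * x1 * (b (j + 1) - b j)
termination_by m => m
decreasing_by all_goals omega

lemma reconAux_congr {x1 : ℤ} {b b' : ℕ → ℤ} : ∀ {m : ℕ}, (∀ j < m, b j = b' j) →
    reconAux x1 b m = reconAux x1 b' m
  | 0, _ => by simp only [reconAux]
  | 1, _ => by simp only [reconAux]
  | j + 2, h => by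
    rw [reconAux, reconAux]
    have h1 : reconAux x1 b (j + 1) = reconAux x1 b' (j + 1) :=
      reconAux_congr fun i hi => h i (by omega)
    have h2 : ∀ i, reconAux x1 b (min i (j + 1)) = reconAux x1 b' (min i (j + 1)) := fun i =>
      reconAux_congr fun i' hi' => h i' (by omega)
    rw [h1, funext h2, h (j + 1) (by omega), h j (by omega)]
termination_by m => m
decreasing_by all_goals omega

lemma IsPath.reconAux_eq {p : ℕ → ℤ} (hp : IsPath p) : ∀ m, reconAux (p 1) (CV p) m = p m := by
  intro m
  induction m using Nat.strong_induction_on with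
  | _ m ih =>
    match m with
    | 0 => simp only [reconAux]; exact hp.1.symm
    | 1 => simp only [reconAux]
    | j + 2 =>
      rw [reconAux]
      have h2 : (fun i => reconAux (p 1) (CV p) (min i (j + 1))) = fun i => p (min i (j + 1)) :=
        funext fun i => ih _ (by omega)
      rw [ih (j + 1) (by omega), h2]
      have hell : cvEll (fun i => p (min i (j + 1))) (j + 1) = cvEll p (j + 1) :=
        cvEll_congr fun i hi => by rw [min_eq_left hi]
      have hbar : CV p (j + 1) - CV p j = cvBarX p (j + 1) := CV_succ_sub p j
      rw [hell, hbar]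
      unfold cvBarX
      have h1 : p 1 * inc p 1 = 1 := by
        rw [hp.inc_one]
        rcases hp.one_mem with h | h <;> rw [h] <;> norm_num
      have hinc : inc p (j + 1 + 1) = p (j + 2) - p (j + 1) := by
        show p (j + 2) - p (j + 2 - 1) = _
        norm_num
      have hA : ((-1 : ℤ) ^ cvEll p (j + 1)) * ((-1 : ℤ) ^ cvEll p (j + 1)) = 1 :=
        neg_one_pow_mul_self _
      have expand : (-1 : ℤ) ^ cvEll p (j + 1) * p 1 *
          ((-1 : ℤ) ^ cvEll p (j + 1) * inc p 1 * inc p (j + 1 + 1)) =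
          ((-1 : ℤ) ^ cvEll p (j + 1) * (-1 : ℤ) ^ cvEll p (j + 1)) * (p 1 * inc p 1) *
            inc p (j + 1 + 1) := by ring
      rw [expand, hA, h1, hinc]
      ring


lemma reconAux_zero (x1 : ℤ) (b : ℕ → ℤ) : reconAux x1 b 0 = 0 := by simp only [reconAux]

lemma reconAux_one (x1 : ℤ) (b : ℕ → ℤ) : reconAux x1 b 1 = x1 := by simp only [reconAux]

lemma reconAux_inc_one (x1 : ℤ) (b : ℕ → ℤ) : inc (reconAux x1 b) 1 = x1 := by
  show reconAux x1 b 1 - reconAux x1 b (1 - 1) = x1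
  norm_num [reconAux_zero, reconAux_one]

lemma reconAux_inc_succ (x1 : ℤ) (b : ℕ → ℤ) (j : ℕ) :
    inc (reconAux x1 b) (j + 2) =
      (-1) ^ cvEll (reconAux x1 b) (j + 1) * x1 * (b (j + 1) - b j) := by
  have h : inc (reconAux x1 b) (j + 2) = reconAux x1 b (j + 2) - reconAux x1 b (j + 1) := by
    show reconAux x1 b (j + 2) - reconAux x1 b (j + 2 - 1) = _
    norm_num
  rw [h, reconAux]
  have hell : cvEll (fun i => reconAux x1 b (min i (j + 1))) (j + 1)
      = cvEll (reconAux x1 b) (j + 1) :=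
    cvEll_congr fun i hi => by rw [min_eq_left hi]
  rw [hell]
  ring

lemma reconAux_cvBarX {x1 : ℤ} (hx : x1 * x1 = 1) (b : ℕ → ℤ) (j : ℕ) :
    cvBarX (reconAux x1 b) (j + 1) = b (j + 1) - b j := by
  unfold cvBarX
  rw [reconAux_inc_one, reconAux_inc_succ]
  have expand : (-1 : ℤ) ^ cvEll (reconAux x1 b) (j + 1) * x1 *
      ((-1 : ℤ) ^ cvEll (reconAux x1 b) (j + 1) * x1 * (b (j + 1) - b j)) =
      ((-1 : ℤ) ^ cvEll (reconAux x1 b) (j + 1) * (-1 : ℤ) ^ cvEll (reconAux x1 b) (j + 1)) *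
        (x1 * x1) * (b (j + 1) - b j) := by ring
  rw [expand, neg_one_pow_mul_self, hx]
  ring

lemma reconAux_CV {x1 : ℤ} (hx : x1 * x1 = 1) {b : ℕ → ℤ} (hb0 : b 0 = 0) (k : ℕ) :
    CV (reconAux x1 b) k = b k := by
  induction k with
  | zero => rw [CV_zero, hb0]
  | succ k ih =>
    have := CV_succ_sub (reconAux x1 b) k
    rw [reconAux_cvBarX hx b k] at this
    omega

lemma reconAux_isPath {x1 : ℤ} (hx : x1 = 1 ∨ x1 = -1) {b : ℕ → ℤ}
    (hb : ∀ j, b (j + 1) - b j = 1 ∨ b (j + 1) - b j = -1) : IsPath (reconAux x1 b) := by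
  constructor
  · exact reconAux_zero x1 b
  · intro i
    match i with
    | 0 =>
      rw [reconAux_one, reconAux_zero]
      rcases hx with h | h <;> simp [h]
    | j + 1 =>
      have h := reconAux_inc_succ x1 b j
      have h2 : inc (reconAux x1 b) (j + 2) =
          reconAux x1 b (j + 2) - reconAux x1 b (j + 1) := by
        show reconAux x1 b (j + 2) - reconAux x1 b (j + 2 - 1) = _
        norm_num
      rw [h2] at h
      rw [h]
      exact sign_cases_mul (neg_one_pow_cases _) hx (hb j)


section Prob

variable {Ω : Type*} [MeasurableSpace Ω] {P : Measure Ω} [IsProbabilityMeasure P]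

lemma meas_event {W : Ω → ℤ} (hW : Measurable W) (v : ℤ) :
    MeasurableSet {ω | W ω = v} := hW (measurableSet_singleton v)

lemma point_finset {W : ℕ → Ω → ℤ} (hmeas : ∀ i, Measurable (W i))
    (hval : ∀ i ω, W i ω = 1 ∨ W i ω = -1)
    (hpoint : ∀ n (v : ℕ → ℤ), (∀ i, v i = 1 ∨ v i = -1) →
      P (⋂ i ∈ Finset.range n, {ω | W i ω = v i}) = 2⁻¹ ^ n)
    (s : Finset ℕ) (v : ℕ → ℤ) (hv : ∀ i, v i = 1 ∨ v i = -1) :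
    P (⋂ i ∈ s, {ω | W i ω = v i}) = 2⁻¹ ^ s.card := by
  classical
  obtain ⟨n, hn⟩ : ∃ n, s ⊆ Finset.range n :=
    ⟨s.sup id + 1, fun x hx => Finset.mem_range.2 (Nat.lt_succ_of_le (Finset.le_sup (f := id) hx))⟩
  have key : ∀ (k : ℕ) (t : Finset ℕ), t ⊆ Finset.range n → (Finset.range n \ t).card = k →
      ∀ v : ℕ → ℤ, (∀ i, v i = 1 ∨ v i = -1) →
      P (⋂ i ∈ t, {ω | W i ω = v i}) = 2⁻¹ ^ t.card := by
    intro k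
    induction k with
    | zero =>
      intro t hsub hcard v hv
      have ht : t = Finset.range n := by
        have h1 : Finset.range n \ t = ∅ := Finset.card_eq_zero.mp hcard
        refine Finset.Subset.antisymm hsub fun x hx => ?_
        by_contra hxt
        have : x ∈ Finset.range n \ t := Finset.mem_sdiff.2 ⟨hx, hxt⟩
        simp [h1] at this
      subst ht
      rw [Finset.card_range]
      exact hpoint n v hv
    | succ k ih =>
      intro t hsub hcard v hv
      obtain ⟨j, hj⟩ := Finset.card_pos.mp (show 0 < (Finset.range n \ t).card by omega)
      obtain ⟨hjn, hjt⟩ := Finset.mem_sdiff.mp hj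
      have hins : insert j t ⊆ Finset.range n := Finset.insert_subset hjn hsub
      have hcard' : (Finset.range n \ insert j t).card = k := by
        have e1 : Finset.range n \ insert j t = (Finset.range n \ t).erase j := by
          ext x
          simp only [Finset.mem_sdiff, Finset.mem_erase, Finset.mem_insert]
          tauto
        rw [e1, Finset.card_erase_of_mem hj]
        omega
      have hvup : ∀ (e : ℤ), (e = 1 ∨ e = -1) →
          ∀ i, Function.update v j e i = 1 ∨ Function.update v j e i = -1 := by
        intro e he i
        rcases eq_or_ne i j with rfl | hne
        · simpa using he
        · rw [Function.update_of_ne hne]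
          exact hv i
      have hsplit : (⋂ i ∈ t, {ω | W i ω = v i}) =
          (⋂ i ∈ insert j t, {ω | W i ω = Function.update v j 1 i}) ∪
          (⋂ i ∈ insert j t, {ω | W i ω = Function.update v j (-1) i}) := by
        ext ω
        simp only [Set.mem_iInter, Set.mem_union, Set.mem_setOf_eq, Finset.mem_insert]
        constructor
        · intro h
          have hup : ∀ (e : ℤ), W j ω = e →
              ∀ i, i = j ∨ i ∈ t → W i ω = Function.update v j e i := by
            intro e he i hi
            rcases hi with rfl | hit
            · rwa [Function.update_self]
            · rw [Function.update_of_ne (by rintro rfl; exact hjt hit)]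
              exact h i hit
          rcases hval j ω with h1 | h1
          · exact Or.inl (hup 1 h1)
          · exact Or.inr (hup (-1) h1)
        · rintro (h | h) i hi <;>
          · have := h i (Or.inr hi)
            rwa [Function.update_of_ne (by rintro rfl; exact hjt hi)] at this
      have hdis : Disjoint (⋂ i ∈ insert j t, {ω | W i ω = Function.update v j 1 i})
          (⋂ i ∈ insert j t, {ω | W i ω = Function.update v j (-1) i}) := by
        rw [Set.disjoint_left]
        intro ω h1 h2
        simp only [Set.mem_iInter, Set.mem_setOf_eq] at h1 h2
        have e1 := h1 j (Finset.mem_insert_self j t)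
        have e2 := h2 j (Finset.mem_insert_self j t)
        rw [Function.update_self] at e1 e2
        rw [e1] at e2
        norm_num at e2
      have hmeasB : MeasurableSet
          (⋂ i ∈ insert j t, {ω | W i ω = Function.update v j (-1) i}) :=
        Finset.measurableSet_biInter _ fun i _ => meas_event (hmeas i) _
      rw [hsplit, measure_union hdis hmeasB, ih _ hins hcard' _ (hvup 1 (Or.inl rfl)),
        ih _ hins hcard' _ (hvup (-1) (Or.inr rfl)), Finset.card_insert_of_notMem hjt,
        pow_succ, ← mul_add, ENNReal.inv_two_add_inv_two, mul_one]
  exact key _ s hn rfl v hv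

lemma uh_marginal {W : ℕ → Ω → ℤ} (hmeas : ∀ i, Measurable (W i))
    (hval : ∀ i ω, W i ω = 1 ∨ W i ω = -1)
    (hpoint : ∀ (s : Finset ℕ) (v : ℕ → ℤ), (∀ i, v i = 1 ∨ v i = -1) →
      P (⋂ i ∈ s, {ω | W i ω = v i}) = 2⁻¹ ^ s.card)
    (i : ℕ) (e : ℤ) (he : e = 1 ∨ e = -1) : P {ω | W i ω = e} = 2⁻¹ := by
  have := hpoint {i} (fun _ => e) (fun _ => he)
  simpa using this

lemma uh_iIndepFun {W : ℕ → Ω → ℤ} (hmeas : ∀ i, Measurable (W i))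
    (hval : ∀ i ω, W i ω = 1 ∨ W i ω = -1)
    (hpoint : ∀ (s : Finset ℕ) (v : ℕ → ℤ), (∀ i, v i = 1 ∨ v i = -1) →
      P (⋂ i ∈ s, {ω | W i ω = v i}) = 2⁻¹ ^ s.card) :
    iIndepFun W P := by
  classical
  have hcomap : ∀ i, MeasurableSpace.comap (W i) inferInstance =
      MeasurableSpace.generateFrom {{ω | W i ω = 1}, {ω | W i ω = -1}} := by
    intro i
    refine le_antisymm ?_ ?_
    · rintro A ⟨B, -, rfl⟩
      have hsplit : W i ⁻¹' B = {ω | W i ω = 1 ∧ (1 : ℤ) ∈ B} ∪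
          {ω | W i ω = -1 ∧ (-1 : ℤ) ∈ B} := by
        ext ω
        constructor
        · intro hm
          rcases hval i ω with h | h
          · exact Or.inl ⟨h, h ▸ hm⟩
          · exact Or.inr ⟨h, h ▸ hm⟩
        · rintro (⟨h, hB⟩ | ⟨h, hB⟩) <;> simp only [Set.mem_preimage, h] <;> exact hB
      rw [hsplit]
      have hp1 : MeasurableSet[MeasurableSpace.generateFrom
          {{ω | W i ω = 1}, {ω | W i ω = -1}}] {ω | W i ω = 1 ∧ (1 : ℤ) ∈ B} := by
        by_cases hB : (1 : ℤ) ∈ B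
        · simp only [hB, and_true]
          exact MeasurableSpace.measurableSet_generateFrom (Set.mem_insert _ _)
        · simp only [hB, and_false, Set.setOf_false]
          exact @MeasurableSet.empty _ (MeasurableSpace.generateFrom _)
      have hp2 : MeasurableSet[MeasurableSpace.generateFrom
          {{ω | W i ω = 1}, {ω | W i ω = -1}}] {ω | W i ω = -1 ∧ (-1 : ℤ) ∈ B} := by
        by_cases hB : (-1 : ℤ) ∈ B
        · simp only [hB, and_true]
          exact MeasurableSpace.measurableSet_generateFrom (Set.mem_insert_of_mem _ rfl)
        · simp only [hB, and_false, Set.setOf_false]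
          exact @MeasurableSet.empty _ (MeasurableSpace.generateFrom _)
      exact hp1.union hp2
    · refine MeasurableSpace.generateFrom_le ?_
      rintro A (rfl | rfl)
      · exact ⟨{1}, measurableSet_singleton _, rfl⟩
      · exact ⟨{-1}, measurableSet_singleton _, rfl⟩
  have hpi : ∀ i, IsPiSystem ({{ω | W i ω = 1}, {ω | W i ω = -1}} : Set (Set Ω)) := by
    intro i a ha b hb hne
    have hdisj : ({ω | W i ω = 1} : Set Ω) ∩ {ω | W i ω = -1} = ∅ := by
      ext ω
      simp only [Set.mem_inter_iff, Set.mem_setOf_eq, Set.mem_empty_iff_false, iff_false]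
      rintro ⟨h1, h2⟩
      rw [h1] at h2
      norm_num at h2
    rcases ha with rfl | rfl <;> rcases hb with rfl | rfl
    · rw [Set.inter_self]; exact Set.mem_insert _ _
    · exact absurd hdisj hne.ne_empty
    · exact absurd (Set.inter_comm _ _ ▸ hdisj) hne.ne_empty
    · rw [Set.inter_self]; exact Set.mem_insert_of_mem _ rfl
  have h_ind : iIndepSets (fun i => ({{ω | W i ω = 1}, {ω | W i ω = -1}} : Set (Set Ω))) P := by
    rw [iIndepSets_iff]
    intro s f hf
    set v : ℕ → ℤ := fun i => if f i = {ω | W i ω = 1} then 1 else -1 with hv_def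
    have hveq : ∀ i, v i = 1 ∨ v i = -1 := by
      intro i
      by_cases h : f i = {ω | W i ω = 1} <;> simp [hv_def, h]
    have hfv : ∀ i ∈ s, f i = {ω | W i ω = v i} := by
      intro i hi
      by_cases h : f i = {ω | W i ω = 1}
      · rw [h]; simp [hv_def, h]
      · rcases hf i hi with h' | h'
        · exact absurd h' h
        · rw [h']; simp only [hv_def]; rw [if_neg h]
    have e1 : (⋂ i ∈ s, f i) = ⋂ i ∈ s, {ω | W i ω = v i} := Set.iInter₂_congr hfv
    rw [e1, hpoint s v hveq]
    have e2 : ∀ i ∈ s, P (f i) = 2⁻¹ := by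
      intro i hi
      rw [hfv i hi]
      exact uh_marginal hmeas hval hpoint i (v i) (hveq i)
    rw [Finset.prod_congr rfl e2, Finset.prod_const]
  exact iIndepSets.iIndep (fun i => Measurable.comap_le (hmeas i)) _ hpi hcomap h_ind

end Prob


/-- The family `(X_1, X̄_1, X̄_2, …)`. -/
def Zfam {Ω : Type*} (S : Ω → ℕ → ℤ) : ℕ → Ω → ℤ
  | 0 => fun ω => S ω 1 - S ω 0
  | i + 1 => fun ω => cvBarX (S ω) (i + 1)

lemma measurable_of_depends {Ω : Type*} {m' : MeasurableSpace Ω} {S : Ω → ℕ → ℤ}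
    (F : (ℕ → ℤ) → ℤ) (m : ℕ)
    (hF : ∀ p q : ℕ → ℤ, (∀ i ≤ m, p i = q i) → F p = F q)
    (hS : ∀ i ≤ m, Measurable[m'] fun ω => S ω i) :
    Measurable[m'] fun ω => F (S ω) := by
  have heq : (fun ω => F (S ω)) =
      (fun v : Fin (m + 1) → ℤ => F (fun i => if h : i < m + 1 then v ⟨i, h⟩ else 0)) ∘
        (fun ω (j : Fin (m + 1)) => S ω j) := by
    funext ω
    simp only [Function.comp_apply]
    refine (hF _ _ fun i hi => ?_).symm
    rw [dif_pos (by omega : i < m + 1)]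
  rw [heq]
  exact (measurable_of_countable _).comp (measurable_pi_lambda _ fun j => hS j (by omega))

lemma IsSRW.isPath {Ω : Type*} [MeasurableSpace Ω] {P : Measure Ω} {S : Ω → ℕ → ℤ}
    (hS : IsSRW P S) (ω : Ω) : IsPath (S ω) := ⟨hS.1 ω, fun i => hS.2.1 ω i⟩

section Walk

variable {Ω : Type*} [MeasurableSpace Ω] {P : Measure Ω} [IsProbabilityMeasure P]
  {S : Ω → ℕ → ℤ}

lemma Zfam_measurable (hS : IsSRW P S) (i : ℕ) : Measurable (Zfam S i) := by
  match i with
  | 0 => exact (hS.2.2.1 1).sub (hS.2.2.1 0)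
  | i + 1 =>
    show Measurable fun ω => cvBarX (S ω) (i + 1)
    exact measurable_of_depends (fun p => cvBarX p (i + 1)) (i + 2)
      (fun p q h => cvBarX_congr fun i' hi' => h i' (by omega))
      (fun j _ => hS.2.2.1 j)

lemma Zfam_val (hS : IsSRW P S) (i : ℕ) (ω : Ω) : Zfam S i ω = 1 ∨ Zfam S i ω = -1 := by
  match i with
  | 0 => exact hS.2.1 ω 0
  | i + 1 => exact (hS.isPath ω).cvBarX_cases i

/-- the point formula for `(X_1, X̄_1, X̄_2, …)` over initial segments -/
lemma Zfam_point_range (hS : IsSRW P S) (n : ℕ) (v : ℕ → ℤ) (hv : ∀ i, v i = 1 ∨ v i = -1) :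
    P (⋂ i ∈ Finset.range n, {ω | Zfam S i ω = v i}) = 2⁻¹ ^ n := by
  classical
  rcases Nat.eq_zero_or_pos n with rfl | hn
  · simp
  -- the reconstructed increments
  set b : ℕ → ℤ := fun j => ∑ i ∈ Finset.range j, v (i + 1) with hb_def
  have hb0 : b 0 = 0 := by simp [hb_def]
  have hbinc : ∀ j, b (j + 1) - b j = v (j + 1) := by
    intro j
    simp [hb_def, Finset.sum_range_succ]
  set q : ℕ → ℤ := reconAux (v 0) b with hq_def
  have hqpath : IsPath q :=
    reconAux_isPath (hv 0) (fun j => by rw [hbinc j]; exact hv (j + 1))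
  set u : ℕ → ℤ := fun i => q (i + 1) - q i with hu_def
  have hu : ∀ i, u i = 1 ∨ u i = -1 := fun i => hqpath.2 i
  have hvv : (v 0) * (v 0) = 1 := by rcases hv 0 with h | h <;> rw [h] <;> norm_num
  -- event equality
  have hevent : (⋂ i ∈ Finset.range n, {ω | Zfam S i ω = v i}) =
      ⋂ i ∈ Finset.range n, {ω | S ω (i + 1) - S ω i = u i} := by
    ext ω
    have hp : IsPath (S ω) := hS.isPath ω
    simp only [Set.mem_iInter, Set.mem_setOf_eq, Finset.mem_range]
    constructor
    · intro h i hi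
      have hx1 : S ω 1 = v 0 := by
        have h0 := h 0 hn
        show S ω 1 = v 0
        rw [← h0]
        show S ω 1 = S ω 1 - S ω 0
        rw [hp.1, sub_zero]
      have hCVb : ∀ j < n, CV (S ω) j = b j := by
        intro j hj
        rw [hb_def]
        unfold CV
        refine Finset.sum_congr rfl fun i hi' => ?_
        simp only [Finset.mem_range] at hi'
        exact h (i + 1) (by omega)
      have hq_eq : ∀ m ≤ n, q m = S ω m := by
        intro m hm
        rw [hq_def, ← hx1]
        rw [reconAux_congr (fun j hj => (hCVb j (by omega)).symm)]
        exact hp.reconAux_eq m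
      rw [hu_def]
      simp only
      rw [hq_eq (i + 1) (by omega), hq_eq i (by omega)]
    · intro h i hi
      have hq_eq : ∀ m ≤ n, q m = S ω m := by
        intro m hm
        induction m with
        | zero => rw [hq_def, reconAux_zero, hp.1]
        | succ m ihm =>
          have h1 := h m (by omega)
          have h2 : u m = q (m + 1) - q m := rfl
          rw [h2] at h1
          have := ihm (by omega)
          omega
      match i with
      | 0 =>
        show S ω 1 - S ω 0 = v 0
        rw [hp.1, sub_zero, ← hq_eq 1 (by omega), hq_def, reconAux_one]
      | i + 1 =>
        show cvBarX (S ω) (i + 1) = v (i + 1)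
        rw [← cvBarX_congr (fun i' hi' => (hq_eq i' (by omega)))]
        rw [hq_def, reconAux_cvBarX hvv, hbinc]
  rw [hevent]
  have hXind := hS.2.2.2.1
  have hpre : ∀ i, {ω | S ω (i + 1) - S ω i = u i} =
      (fun ω => S ω (i + 1) - S ω i) ⁻¹' {u i} := fun i => rfl
  have := hXind.measure_inter_preimage_eq_mul (Finset.range n)
    (sets := fun i => {u i}) (fun i _ => measurableSet_singleton _)
  simp only [← hpre] at this
  rw [this]
  have hmarg : ∀ i ∈ Finset.range n, P {ω | S ω (i + 1) - S ω i = u i} = 2⁻¹ := by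
    intro i _
    rcases hu i with h | h <;> rw [h]
    · rw [← one_div]
      exact hS.2.2.2.2.1 i
    · rw [← one_div]
      exact hS.2.2.2.2.2 i
  rw [Finset.prod_congr rfl hmarg, Finset.prod_const, Finset.card_range]

end Walk

lemma measurableSet_of_le {Ω : Type*} {m1 m2 : MeasurableSpace Ω} (h : m1 ≤ m2) {s : Set Ω}
    (hs : MeasurableSet[m1] s) : MeasurableSet[m2] s := h _ hs

lemma CViter_succ_left (n : ℕ) (p : ℕ → ℤ) : CViter (n + 1) p = CViter n (CV p) := by
  induction n with
  | zero => rfl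
  | succ n ih => rw [show CViter (n + 2) p = CV (CViter (n + 1) p) from rfl, ih]; rfl

lemma indep_sup_right_of {Ω : Type*} [m0 : MeasurableSpace Ω] {P : Measure Ω}
    [IsProbabilityMeasure P] {ma mb mc : MeasurableSpace Ω}
    (ha : ma ≤ m0) (hb : mb ≤ m0) (hc : mc ≤ m0)
    (hab : Indep ma mb P) (hcab : Indep mc (ma ⊔ mb) P) : Indep ma (mb ⊔ mc) P := by
  set p1 : Set (Set Ω) := {s | MeasurableSet[ma] s} with hp1_def
  set p2 : Set (Set Ω) :=
    {s : Set Ω | ∃ B C, MeasurableSet[mb] B ∧ MeasurableSet[mc] C ∧ s = B ∩ C} with hp2_def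
  have hp1 : IsPiSystem p1 := fun s hs t ht _ => MeasurableSet.inter hs ht
  have hp2 : IsPiSystem p2 := by
    rintro s ⟨B, C, hB, hC, rfl⟩ t ⟨B', C', hB', hC', rfl⟩ _
    exact ⟨B ∩ B', C ∩ C', hB.inter hB', hC.inter hC', by rw [Set.inter_inter_inter_comm]⟩
  have hgen1 : ma = MeasurableSpace.generateFrom p1 :=
    le_antisymm (fun s hs => MeasurableSpace.measurableSet_generateFrom hs)
      (MeasurableSpace.generateFrom_le fun s hs => hs)
  have hgen2 : mb ⊔ mc = MeasurableSpace.generateFrom p2 := by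
    refine le_antisymm (sup_le ?_ ?_) (MeasurableSpace.generateFrom_le ?_)
    · intro s hs
      exact MeasurableSpace.measurableSet_generateFrom
        ⟨s, Set.univ, hs, MeasurableSet.univ, (Set.inter_univ s).symm⟩
    · intro s hs
      exact MeasurableSpace.measurableSet_generateFrom
        ⟨Set.univ, s, MeasurableSet.univ, hs, (Set.univ_inter s).symm⟩
    · rintro s ⟨B, C, hB, hC, rfl⟩
      exact (measurableSet_of_le le_sup_left hB).inter (measurableSet_of_le le_sup_right hC)
  have hIS : IndepSets p1 p2 P := by
    rw [IndepSets_iff]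
    rintro t1 t2 ht1 ⟨B, C, hB, hC, rfl⟩
    have hcab' := hcab.symm
    have h3 : P (B ∩ C) = P B * P C :=
      (Indep_iff _ _ _).1 hcab' B C (measurableSet_of_le le_sup_right hB) hC
    have h1 : P ((t1 ∩ B) ∩ C) = P (t1 ∩ B) * P C :=
      (Indep_iff _ _ _).1 hcab' (t1 ∩ B) C
        ((measurableSet_of_le le_sup_left ht1).inter (measurableSet_of_le le_sup_right hB)) hC
    have h2 : P (t1 ∩ B) = P t1 * P B := (Indep_iff _ _ _).1 hab t1 B ht1 hB
    calc P (t1 ∩ (B ∩ C)) = P ((t1 ∩ B) ∩ C) := by rw [Set.inter_assoc]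
    _ = P t1 * P B * P C := by rw [h1, h2]
    _ = P t1 * P (B ∩ C) := by rw [h3, mul_assoc]
  exact IndepSets.indep ha (sup_le hb hc) hp1 hp2 hgen1 hgen2 hIS

section Walk2

variable {Ω : Type*} [MeasurableSpace Ω] {P : Measure Ω} [IsProbabilityMeasure P]
  {S : Ω → ℕ → ℤ}

lemma Zfam_point (hS : IsSRW P S) (s : Finset ℕ) (v : ℕ → ℤ) (hv : ∀ i, v i = 1 ∨ v i = -1) :
    P (⋂ i ∈ s, {ω | Zfam S i ω = v i}) = 2⁻¹ ^ s.card :=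
  point_finset (Zfam_measurable hS) (Zfam_val hS) (Zfam_point_range hS) s v hv

lemma Zfam_iIndepFun (hS : IsSRW P S) : iIndepFun (Zfam S) P :=
  uh_iIndepFun (Zfam_measurable hS) (Zfam_val hS) (Zfam_point hS)

lemma CVinc_point (hS : IsSRW P S) (s : Finset ℕ) (v : ℕ → ℤ)
    (hv : ∀ i, v i = 1 ∨ v i = -1) :
    P (⋂ i ∈ s, {ω | CV (S ω) (i + 1) - CV (S ω) i = v i}) = 2⁻¹ ^ s.card := by
  classical
  have hshift : ∀ i (ω : Ω), CV (S ω) (i + 1) - CV (S ω) i = Zfam S (i + 1) ω := by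
    intro i ω
    rw [CV_succ_sub]
    rfl
  set v' : ℕ → ℤ := fun j => if j = 0 then 1 else v (j - 1) with hv'_def
  have hv' : ∀ j, v' j = 1 ∨ v' j = -1 := by
    intro j
    by_cases h : j = 0 <;> simp [hv'_def, h]
    exact hv (j - 1)
  have hev : (⋂ i ∈ s, {ω | CV (S ω) (i + 1) - CV (S ω) i = v i}) =
      ⋂ j ∈ s.image (· + 1), {ω | Zfam S j ω = v' j} := by
    ext ω
    simp only [Set.mem_iInter, Set.mem_setOf_eq, Finset.mem_image]
    constructor
    · rintro h j ⟨i, hi, rfl⟩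
      rw [hv'_def]
      simp only [Nat.add_eq_zero, and_false, if_false]
      rw [← hshift]
      simpa using h i hi
    · intro h i hi
      rw [hshift]
      have := h (i + 1) ⟨i, hi, rfl⟩
      rw [hv'_def] at this
      simpa using this
  rw [hev, Zfam_point hS _ v' hv',
    Finset.card_image_of_injective _ (fun a b hab => by omega)]

lemma CV_isSRW (hS : IsSRW P S) : IsSRW P (fun ω => CV (S ω)) := by
  have hmeas : ∀ i, Measurable fun ω => CV (S ω) i := fun i =>
    measurable_of_depends (fun p => CV p i) (i + 1) (fun p q h => CV_congr h)
      (fun j _ => hS.2.2.1 j)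
  have hmeas' : ∀ i, Measurable fun ω => CV (S ω) (i + 1) - CV (S ω) i := fun i =>
    (hmeas (i + 1)).sub (hmeas i)
  have hval : ∀ i (ω : Ω), CV (S ω) (i + 1) - CV (S ω) i = 1 ∨
      CV (S ω) (i + 1) - CV (S ω) i = -1 := by
    intro i ω
    rw [CV_succ_sub]
    exact (hS.isPath ω).cvBarX_cases i
  refine ⟨fun ω => CV_zero _, fun ω i => hval i ω, hmeas, ?_, ?_, ?_⟩
  · exact uh_iIndepFun (W := fun i ω => CV (S ω) (i + 1) - CV (S ω) i) hmeas'
      (fun i ω => hval i ω) (CVinc_point hS)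
  · intro i
    rw [one_div]
    exact uh_marginal (W := fun i ω => CV (S ω) (i + 1) - CV (S ω) i) hmeas'
      (fun i ω => hval i ω) (CVinc_point hS) i 1 (Or.inl rfl)
  · intro i
    rw [one_div]
    exact uh_marginal (W := fun i ω => CV (S ω) (i + 1) - CV (S ω) i) hmeas'
      (fun i ω => hval i ω) (CVinc_point hS) i (-1) (Or.inr rfl)

lemma Z0_indep (hS : IsSRW P S) :
    Indep (MeasurableSpace.comap (Zfam S 0) inferInstance)
      (⨆ i : ℕ, MeasurableSpace.comap (Zfam S (i + 1)) inferInstance) P := by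
  have hZ : iIndep (fun i => MeasurableSpace.comap (Zfam S i) inferInstance) P :=
    Zfam_iIndepFun hS
  have h := indep_iSup_of_disjoint (fun i => (Zfam_measurable hS i).comap_le) hZ
    (S := {0}) (T := {0}ᶜ) disjoint_compl_right
  refine indep_of_indep_of_le_right (indep_of_indep_of_le_left h ?_) ?_
  · exact le_iSup₂ (f := fun i (_ : i ∈ ({0} : Set ℕ)) =>
      MeasurableSpace.comap (Zfam S i) inferInstance) 0 rfl
  · exact iSup_le fun i => le_iSup₂ (f := fun j (_ : j ∈ ({0}ᶜ : Set ℕ)) =>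
      MeasurableSpace.comap (Zfam S j) inferInstance) (i + 1) (by simp)

end Walk2

section Main

variable {Ω : Type*} [MeasurableSpace Ω] {P : Measure Ω} [IsProbabilityMeasure P]

def mZalg {Ω : Type*} (S : Ω → ℕ → ℤ) : MeasurableSpace Ω :=
  ⨆ i : ℕ, MeasurableSpace.comap (Zfam S (i + 1)) inferInstance

lemma key_induction : ∀ (n : ℕ) (S : Ω → ℕ → ℤ), IsSRW P S →
    IsSRW P (fun ω => CViter n (S ω)) ∧
    Indep (⨆ k : ℕ, MeasurableSpace.comap (fun ω => CViter n (S ω) k) inferInstance)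
      (⨆ k : ℕ, ⨆ _ : k ≤ n, MeasurableSpace.comap (fun ω => S ω k) inferInstance) P := by
  intro n
  induction n with
  | zero =>
    intro S hS
    refine ⟨hS, ?_⟩
    have hbot : (⨆ k : ℕ, ⨆ _ : k ≤ 0,
        MeasurableSpace.comap (fun ω => S ω k) inferInstance) ≤ ⊥ := by
      refine iSup_le fun k => iSup_le fun hk => ?_
      have hk0 : k = 0 := Nat.le_zero.mp hk
      subst hk0
      rintro A ⟨B, hB, rfl⟩
      rw [MeasurableSpace.measurableSet_bot_iff]
      by_cases h0 : (0 : ℤ) ∈ B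
      · right; ext ω; simp [Set.mem_preimage, hS.1 ω, h0]
      · left; ext ω; simp [Set.mem_preimage, hS.1 ω, h0]
    exact indep_of_indep_of_le_right (indep_bot_right _) hbot
  | succ n ih =>
    intro S hS
    set S' : Ω → ℕ → ℤ := fun ω => CV (S ω) with hS'_def
    have hS' : IsSRW P S' := CV_isSRW hS
    obtain ⟨hsrw', hind'⟩ := ih S' hS'
    have hfun : ∀ k, (fun ω => CViter (n + 1) (S ω) k) = fun ω => CViter n (S' ω) k := by
      intro k
      funext ω
      rw [hS'_def]
      simp only
      rw [CViter_succ_left]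
    have hGeq : (⨆ k : ℕ, MeasurableSpace.comap (fun ω => CViter (n + 1) (S ω) k)
          inferInstance) =
        ⨆ k : ℕ, MeasurableSpace.comap (fun ω => CViter n (S' ω) k) inferInstance :=
      iSup_congr fun k => by rw [hfun k]
    constructor
    · have heq : (fun ω => CViter (n + 1) (S ω)) = fun ω => CViter n (S' ω) :=
        funext fun ω => CViter_succ_left n (S ω)
      rw [heq]
      exact hsrw'
    · rw [hGeq]
      have hS'measZ : ∀ j, Measurable[mZalg S] fun ω => S' ω j := by
        intro j
        have heq : (fun ω => S' ω j) = fun ω => ∑ i ∈ Finset.range j, Zfam S (i + 1) ω := by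
          funext ω
          rw [hS'_def]
          rfl
        rw [heq]
        exact Finset.measurable_sum _ fun i _ =>
          Measurable.of_comap_le (le_iSup (fun i =>
            MeasurableSpace.comap (Zfam S (i + 1)) inferInstance) i :
            MeasurableSpace.comap (Zfam S (i + 1)) inferInstance ≤ mZalg S)
      have hG'le : (⨆ k : ℕ, MeasurableSpace.comap (fun ω => CViter n (S' ω) k)
          inferInstance) ≤ mZalg S :=
        iSup_le fun k => Measurable.comap_le (measurable_of_depends
          (fun p => CViter n p k) (k + n) (fun p q h => CViter_congr n k h)
          (fun j _ => hS'measZ j))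
      have hF'le : (⨆ k : ℕ, ⨆ _ : k ≤ n,
          MeasurableSpace.comap (fun ω => S' ω k) inferInstance) ≤ mZalg S :=
        iSup_le fun k => iSup_le fun _ => Measurable.comap_le (hS'measZ k)
      have hZ0 : Indep (MeasurableSpace.comap (Zfam S 0) inferInstance) (mZalg S) P :=
        Z0_indep hS
      have hFn1 : (⨆ k : ℕ, ⨆ _ : k ≤ n + 1,
            MeasurableSpace.comap (fun ω => S ω k) inferInstance) ≤
          (⨆ k : ℕ, ⨆ _ : k ≤ n,
            MeasurableSpace.comap (fun ω => S' ω k) inferInstance) ⊔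
            MeasurableSpace.comap (Zfam S 0) inferInstance := by
        refine iSup_le fun k => iSup_le fun hk => Measurable.comap_le ?_
        have heq : (fun ω => S ω k) = fun ω =>
            (fun p : ℕ → ℤ => reconAux (p 0) (fun j => p (j + 1)) k)
              ((fun ω i => if i = 0 then Zfam S 0 ω else S' ω (i - 1)) ω) := by
          funext ω
          have h1 : (fun j => if j + 1 = 0 then Zfam S 0 ω else S' ω (j + 1 - 1)) =
              CV (S ω) := by
            funext j
            rw [hS'_def]
            simp
          show S ω k = reconAux (Zfam S 0 ω)
            (fun j => if j + 1 = 0 then Zfam S 0 ω else S' ω (j + 1 - 1)) k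
          rw [h1]
          show S ω k = reconAux (S ω 1 - S ω 0) (CV (S ω)) k
          rw [hS.1 ω, sub_zero]
          exact ((hS.isPath ω).reconAux_eq k).symm
        rw [heq]
        refine measurable_of_depends
          (S := fun ω i => if i = 0 then Zfam S 0 ω else S' ω (i - 1))
          (fun p => reconAux (p 0) (fun j => p (j + 1)) k) k
          (fun p q h => by
            show reconAux (p 0) (fun j => p (j + 1)) k = reconAux (q 0) (fun j => q (j + 1)) k
            rw [h 0 (Nat.zero_le _)]
            exact reconAux_congr fun j hj => h (j + 1) (by omega)) ?_
        intro i hi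
        by_cases h0 : i = 0
        · subst h0
          have heq2 : (fun ω => if (0 : ℕ) = 0 then Zfam S 0 ω else S' ω (0 - 1)) =
              Zfam S 0 := by
            funext ω
            rw [if_pos rfl]
          rw [heq2]
          exact Measurable.of_comap_le le_sup_right
        · have heq2 : (fun ω => if i = 0 then Zfam S 0 ω else S' ω (i - 1)) =
              fun ω => S' ω (i - 1) := by
            funext ω
            rw [if_neg h0]
          rw [heq2]
          refine Measurable.of_comap_le (le_trans ?_ le_sup_left)
          exact le_iSup₂ (f := fun j (_ : j ≤ n) =>
            MeasurableSpace.comap (fun ω => S' ω j) inferInstance) (i - 1) (by omega)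
      have hGle0 : (⨆ k : ℕ, MeasurableSpace.comap (fun ω => CViter n (S' ω) k)
          inferInstance) ≤ ‹MeasurableSpace Ω› :=
        iSup_le fun k => Measurable.comap_le (hsrw'.2.2.1 k)
      have hFle0 : (⨆ k : ℕ, ⨆ _ : k ≤ n,
          MeasurableSpace.comap (fun ω => S' ω k) inferInstance) ≤ ‹MeasurableSpace Ω› :=
        iSup_le fun k => iSup_le fun _ => Measurable.comap_le (hS'.2.2.1 k)
      have hZ0le0 : MeasurableSpace.comap (Zfam S 0) inferInstance ≤ ‹MeasurableSpace Ω› :=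
        Measurable.comap_le (Zfam_measurable hS 0)
      have main := indep_sup_right_of hGle0 hFle0 hZ0le0 hind'
        (indep_of_indep_of_le_right hZ0 (sup_le hG'le hF'le))
      exact indep_of_indep_of_le_right main hFn1

end Main

theorem cviter_tail_trivial' {Ω : Type*} [MeasurableSpace Ω] (P : Measure Ω)
    [IsProbabilityMeasure P] (S : Ω → ℕ → ℤ) (hS : IsSRW P S) :
    ∀ A : Set Ω,
      MeasurableSet[⨅ n : ℕ,
        ⨆ k : ℕ, MeasurableSpace.comap (fun ω => CViter n (S ω) k) inferInstance] A →
      P A = 0 ∨ P A = 1 := by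
  intro A hA
  set G : ℕ → MeasurableSpace Ω := fun n =>
    ⨆ k : ℕ, MeasurableSpace.comap (fun ω => CViter n (S ω) k) inferInstance with hG_def
  set F : ℕ → MeasurableSpace Ω := fun n =>
    ⨆ k : ℕ, ⨆ _ : k ≤ n, MeasurableSpace.comap (fun ω => S ω k) inferInstance with hF_def
  have hFle : ∀ n, F n ≤ ‹MeasurableSpace Ω› := fun n =>
    iSup_le fun k => iSup_le fun _ => (hS.2.2.1 k).comap_le
  have hGle0 : ∀ n, G n ≤ ‹MeasurableSpace Ω› := fun n =>
    iSup_le fun k => ((key_induction n S hS).1.2.2.1 k).comap_le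
  have hGinf_le0 : (⨅ m, G m) ≤ ‹MeasurableSpace Ω› := le_trans (iInf_le G 0) (hGle0 0)
  have hIndep : ∀ n, Indep (F n) (⨅ m, G m) P := fun n =>
    indep_of_indep_of_le_right ((key_induction n S hS).2).symm (iInf_le G n)
  have hmono : Monotone F := by
    intro a b hab
    refine iSup_mono fun k => iSup_le fun hk => ?_
    exact le_iSup (fun _ : k ≤ b =>
      MeasurableSpace.comap (fun ω => S ω k) inferInstance) (hk.trans hab)
  have hsup : Indep (⨆ n, F n) (⨅ m, G m) P :=
    indep_iSup_of_monotone hIndep hFle hGinf_le0 hmono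
  have hsub : (⨅ m, G m) ≤ ⨆ n, F n := by
    refine le_trans (iInf_le G 0) ?_
    refine iSup_le fun k => ?_
    refine le_trans ?_ (le_iSup F k)
    show MeasurableSpace.comap (fun ω => CViter 0 (S ω) k) inferInstance ≤ F k
    exact le_iSup₂ (f := fun j (_ : j ≤ k) =>
      MeasurableSpace.comap (fun ω => S ω j) inferInstance) k le_rfl
  have hself : Indep (⨅ m, G m) (⨅ m, G m) P := indep_of_indep_of_le_left hsup hsub
  have hAA := (Indep_iff _ _ _).1 hself A A hA hA
  rw [Set.inter_self] at hAA
  by_cases h0 : P A = 0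
  · exact Or.inl h0
  right
  have hne : P A ≠ ⊤ := measure_ne_top P A
  have hx : (P A).toReal = (P A).toReal * (P A).toReal := by
    rw [← ENNReal.toReal_mul, ← hAA]
  have h01 : (P A).toReal = 0 ∨ (P A).toReal = 1 := by
    have hz : (P A).toReal * ((P A).toReal - 1) = 0 := by nlinarith [hx]
    rcases mul_eq_zero.mp hz with h | h
    · exact Or.inl h
    · right; linarith
  rcases h01 with h | h
  · rcases (ENNReal.toReal_eq_zero_iff _).1 h with h' | h'
    · exact absurd h' h0
    · exact absurd h' hne
  · exact (ENNReal.toReal_eq_one_iff _).1 h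

/-- The tail σ-field `⋂ₙ σ(T^n(S))` is `P`-trivial. -/
theorem cviter_tail_trivial {Ω : Type*} [MeasurableSpace Ω] (P : Measure Ω)
    [IsProbabilityMeasure P] (S : Ω → ℕ → ℤ) (hS : IsSRW P S) :
    ∀ A : Set Ω,
      MeasurableSet[⨅ n : ℕ,
        ⨆ k : ℕ, MeasurableSpace.comap (fun ω => CViter n (S ω) k) inferInstance] A →
      P A = 0 ∨ P A = 1 := by
  intro A hA
  exact cviter_tail_trivial' P S hS A hA

end
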